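/- Let V, N be real Hilbert spaces and A*((u,λ),(v,μ)) := a(u,v) + b(λ,v) + b(μ,u) − j(λ,μ) a bilinear form on V × N, where a is symmetric, coercive (a(u,u) ≥ α‖u‖²_V) and bounded (|a(u,v)| ≤ C_a‖u‖_V‖v‖_V), j is symmetric positive semidefinite and bounded, b is bounded, and the stability estimate β‖λ‖_N ≤ sup_{v∈V} b(λ,v)/‖v‖_V + j(λ,λ)^{1/2} holds for all λ ∈ N. Then A* satisfies an inf-sup condition: there is γ > 0 such that for all (u,λ), γ(‖u‖_V + ‖λ‖_N) ≤ sup_{(v,μ)} A*((u,λ),(v,μ))/(‖v‖_V + ‖μ‖_N); consequently the linear problem A*((u,λ),(v,μ)) = F(v,μ) has a unique solution for every bounded linear functional F. -/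

import Mathlib

open InnerProductSpace

lemma stmt14_key (α β Ca d x y s auu auw blw : ℝ) (hα : 0 < α) (hβ : 0 < β) (hCa : 0 < Ca)
    (hd0 : 0 < d) (hd : d * (α + 2 * Ca ^ 2) = 2 * α * β)
    (hx : 0 ≤ x) (hy : 0 ≤ y) (hs : 0 ≤ s)
    (h1 : α * x ^ 2 ≤ auu) (h2 : -(Ca * x) ≤ auw) (h3 : β * y - s ≤ blw) :
    α / 2 * x ^ 2 + d * β / 2 * y ^ 2 ≤ auu + d * y * auw + d * y * blw + s ^ 2 := by
  have hq : d * Ca * x * y + d * y * s ≤ α / 2 * x ^ 2 + d * β / 2 * y ^ 2 + s ^ 2 := by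
    have hd2 : d ^ 2 * (α + 2 * Ca ^ 2) = 2 * α * β * d := by nlinarith [hd]
    nlinarith [sq_nonneg (α * x - d * Ca * y), sq_nonneg (d * y - 2 * s), mul_pos hα hd0,
      mul_nonneg (mul_nonneg hd0.le hy) hs, sq_nonneg y]
  have h2' : -(d * y * (Ca * x)) ≤ d * y * auw := by
    have := mul_le_mul_of_nonneg_left h2 (mul_nonneg hd0.le hy); linarith [this]
  have h3' : d * y * (β * y - s) ≤ d * y * blw :=
    mul_le_mul_of_nonneg_left h3 (mul_nonneg hd0.le hy)
  nlinarith [h2', h3', h1, hq]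

section part1
variable {V N : Type*}
    [NormedAddCommGroup V] [InnerProductSpace ℝ V] [CompleteSpace V]
    [NormedAddCommGroup N] [InnerProductSpace ℝ N] [CompleteSpace N]
    (a : V →ₗ[ℝ] V →ₗ[ℝ] ℝ) (b : N →ₗ[ℝ] V →ₗ[ℝ] ℝ) (j : N →ₗ[ℝ] N →ₗ[ℝ] ℝ)
    (α Ca Cb Cj β : ℝ)

lemma stmt14_infsup (hα : 0 < α) (hCa : 0 < Ca) (hβ : 0 < β)
    (hacoer : ∀ u, α * ‖u‖ ^ 2 ≤ a u u)
    (habdd : ∀ u v, |a u v| ≤ Ca * ‖u‖ * ‖v‖)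
    (hjpsd : ∀ lam, 0 ≤ j lam lam)
    (hstab : ∀ lam : N, ∃ v : V, ‖v‖ ≤ 1 ∧
      β * ‖lam‖ ≤ b lam v + Real.sqrt (j lam lam)) :
    ∃ γ > 0, ∀ (u : V) (lam : N), ∃ (v : V) (μ : N), ‖v‖ + ‖μ‖ ≤ 1 ∧
      γ * (‖u‖ + ‖lam‖) ≤ a u v + b lam v + b μ u - j lam μ := by
  set d : ℝ := 2 * α * β / (α + 2 * Ca ^ 2) with hd_def
  have hden : 0 < α + 2 * Ca ^ 2 := by positivity
  have hd0 : 0 < d := by positivity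
  have hd : d * (α + 2 * Ca ^ 2) = 2 * α * β := by
    rw [hd_def, div_mul_cancel₀ _ hden.ne']
  set c : ℝ := min (α / 2) (d * β / 2) with hc_def
  have hc0 : 0 < c := lt_min (by positivity) (by positivity)
  have hcα : c ≤ α / 2 := min_le_left _ _
  have hcβ : c ≤ d * β / 2 := min_le_right _ _
  clear_value d c
  clear hd_def hc_def
  refine ⟨c / (2 * (1 + d)), by positivity, fun u lam => ?_⟩
  obtain ⟨w, hw1, hw2⟩ := hstab lam
  set x := ‖u‖
  set y := ‖lam‖
  have hx : 0 ≤ x := norm_nonneg _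
  have hy : 0 ≤ y := norm_nonneg _
  rcases eq_or_lt_of_le (add_nonneg hx hy) with h0 | hpos
  · -- u = 0, lam = 0
    have hu : u = 0 := by have : x = 0 := by linarith [hx, hy, h0.symm]
                          exact norm_eq_zero.mp this
    have hl : lam = 0 := by have : y = 0 := by linarith [hx, hy, h0.symm]
                            exact norm_eq_zero.mp this
    refine ⟨0, 0, by simp, ?_⟩
    simp [hu, hl, ← h0]
  · set S : ℝ := (1 + d) * (x + y) with hS_def
    have hS0 : 0 < S := by positivity
    set s : ℝ := Real.sqrt (j lam lam) with hs_def
    have hs : 0 ≤ s := Real.sqrt_nonneg _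
    have hs2 : s ^ 2 = j lam lam := Real.sq_sqrt (hjpsd lam)
    refine ⟨S⁻¹ • (u + (d * y) • w), S⁻¹ • (-lam), ?_, ?_⟩
    · have hn1 : ‖u + (d * y) • w‖ ≤ x + d * y := by
        calc ‖u + (d * y) • w‖ ≤ ‖u‖ + ‖(d * y) • w‖ := norm_add_le _ _
        _ ≤ x + d * y := by
            rw [norm_smul]
            have : ‖d * y‖ * ‖w‖ ≤ (d * y) * 1 := by
              rw [Real.norm_eq_abs, abs_of_nonneg (by positivity)]
              exact mul_le_mul_of_nonneg_left hw1 (by positivity)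
            simp only [mul_one] at this; linarith [this, show ‖u‖ = x from rfl]
      rw [norm_smul, norm_smul, norm_neg, norm_inv, Real.norm_eq_abs, abs_of_pos hS0]
      rw [← mul_add, inv_mul_le_iff₀ hS0, mul_one]
      calc ‖u + (d * y) • w‖ + y ≤ x + d * y + y := by linarith
      _ ≤ S := by rw [hS_def]; nlinarith [hd0.le, hx]
    · have h2 : -(Ca * x) ≤ a u w := by
        have := (abs_le.mp (habdd u w)).1
        have h3 : Ca * x * ‖w‖ ≤ Ca * x * 1 := by
          apply mul_le_mul_of_nonneg_left hw1 (by positivity)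
        simp only [mul_one] at h3
        linarith
      have hkey := stmt14_key α β Ca d x y s (a u u) (a u w) (b lam w) hα hβ hCa hd0 hd
        hx hy hs (hacoer u) h2 (by linarith [hw2])
      have hE : a u (S⁻¹ • (u + (d * y) • w)) + b lam (S⁻¹ • (u + (d * y) • w))
          + b (S⁻¹ • (-lam)) u - j lam (S⁻¹ • (-lam))
          = S⁻¹ * (a u u + d * y * a u w + d * y * b lam w + j lam lam) := by
        simp only [map_smul, map_add, map_neg, LinearMap.smul_apply, LinearMap.neg_apply,
          LinearMap.add_apply, smul_eq_mul]
        ring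
      rw [hE]
      have hsum : c * (x + y) ^ 2 / 2 ≤ a u u + d * y * a u w + d * y * b lam w + j lam lam := by
        have hcx : c * x ^ 2 ≤ α / 2 * x ^ 2 :=
          mul_le_mul_of_nonneg_right hcα (sq_nonneg _)
        have hcy : c * y ^ 2 ≤ d * β / 2 * y ^ 2 :=
          mul_le_mul_of_nonneg_right hcβ (sq_nonneg _)
        rw [← hs2]
        nlinarith [sq_nonneg (x - y), hc0.le, hkey]
      calc c / (2 * (1 + d)) * (x + y) = S⁻¹ * (c * (x + y) ^ 2 / 2) := by
            field_simp
            ring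
      _ ≤ S⁻¹ * (a u u + d * y * a u w + d * y * b lam w + j lam lam) :=
          mul_le_mul_of_nonneg_left hsum (inv_nonneg.mpr hS0.le)

end part1



section part2
variable {V N : Type*}
    [NormedAddCommGroup V] [InnerProductSpace ℝ V] [CompleteSpace V]
    [NormedAddCommGroup N] [InnerProductSpace ℝ N] [CompleteSpace N]
    (a : V →ₗ[ℝ] V →ₗ[ℝ] ℝ) (b : N →ₗ[ℝ] V →ₗ[ℝ] ℝ) (j : N →ₗ[ℝ] N →ₗ[ℝ] ℝ)

/-- the bilinear form on the `L²` product -/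
noncomputable def stmt14A : WithLp 2 (V × N) →ₗ[ℝ] WithLp 2 (V × N) →ₗ[ℝ] ℝ :=
  LinearMap.mk₂ ℝ (fun p q => a p.fst q.fst + b p.snd q.fst + b q.snd p.fst - j p.snd q.snd)
    (by intro p p' q
        simp only [WithLp.add_fst, WithLp.add_snd, map_add, LinearMap.add_apply]; ring)
    (by intro r p q
        simp only [WithLp.smul_fst, WithLp.smul_snd, map_smul, LinearMap.smul_apply,
          smul_eq_mul]; ring)
    (by intro p q q'
        simp only [WithLp.add_fst, WithLp.add_snd, map_add, LinearMap.add_apply]; ring)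
    (by intro r p q
        simp only [WithLp.smul_fst, WithLp.smul_snd, map_smul, LinearMap.smul_apply,
          smul_eq_mul]; ring)

lemma stmt14_solve (α Ca Cb Cj β γ : ℝ) (hγ : 0 < γ)
    (hCa : 0 < Ca) (hCb : 0 < Cb) (hCj : 0 < Cj)
    (hasymm : ∀ u v, a u v = a v u)
    (habdd : ∀ u v, |a u v| ≤ Ca * ‖u‖ * ‖v‖)
    (hjsymm : ∀ lam μ, j lam μ = j μ lam)
    (hjbdd : ∀ lam μ, |j lam μ| ≤ Cj * ‖lam‖ * ‖μ‖)
    (hbbdd : ∀ lam v, |b lam v| ≤ Cb * ‖lam‖ * ‖v‖)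
    (hsup : ∀ (u : V) (lam : N), ∃ (v : V) (μ : N), ‖v‖ + ‖μ‖ ≤ 1 ∧
      γ * (‖u‖ + ‖lam‖) ≤ a u v + b lam v + b μ u - j lam μ) :
    (∀ F : V × N →L[ℝ] ℝ, ∃! p : V × N, ∀ (v : V) (μ : N),
      a p.1 v + b p.2 v + b μ p.1 - j p.2 μ = F (v, μ)) := by
  intro F
  set P := WithLp 2 (V × N) with hP
  -- norms of components
  have hfst : ∀ z : P, ‖z.fst‖ ≤ ‖z‖ ∧ ‖z.snd‖ ≤ ‖z‖ := by
    intro z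
    have h2 := WithLp.prod_norm_sq_eq_of_L2 z
    constructor <;>
      nlinarith [norm_nonneg z.fst, norm_nonneg z.snd, norm_nonneg z, sq_nonneg (‖z‖)]
  have hwhole : ∀ z : P, ‖z‖ ≤ ‖z.fst‖ + ‖z.snd‖ := by
    intro z
    have h2 := WithLp.prod_norm_sq_eq_of_L2 z
    nlinarith [norm_nonneg z.fst, norm_nonneg z.snd, norm_nonneg z,
      mul_nonneg (norm_nonneg z.fst) (norm_nonneg z.snd)]
  have hA0 : ∀ x y : P, stmt14A a b j x y =
      a x.fst y.fst + b x.snd y.fst + b y.snd x.fst - j x.snd y.snd := fun _ _ => rfl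
  have hbound : ∀ x y : P, ‖stmt14A a b j x y‖ ≤ (Ca + Cb + Cb + Cj) * ‖x‖ * ‖y‖ := by
    intro x y
    rw [hA0, Real.norm_eq_abs]
    obtain ⟨hx1, hx2⟩ := hfst x
    obtain ⟨hy1, hy2⟩ := hfst y
    have n := norm_nonneg x
    have n' := norm_nonneg y
    have t1 : |a x.fst y.fst| ≤ Ca * ‖x‖ * ‖y‖ := by
      refine (habdd _ _).trans ?_
      have := mul_le_mul (mul_le_mul_of_nonneg_left hx1 hCa.le) hy1 (norm_nonneg _)
        (by positivity)
      linarith [this]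
    have t2 : |b x.snd y.fst| ≤ Cb * ‖x‖ * ‖y‖ := by
      refine (hbbdd _ _).trans ?_
      have := mul_le_mul (mul_le_mul_of_nonneg_left hx2 hCb.le) hy1 (norm_nonneg _)
        (by positivity)
      linarith [this]
    have t3 : |b y.snd x.fst| ≤ Cb * ‖x‖ * ‖y‖ := by
      refine (hbbdd _ _).trans ?_
      have := mul_le_mul (mul_le_mul_of_nonneg_left hy2 hCb.le) hx1 (norm_nonneg _)
        (by positivity)
      nlinarith [this]
    have t4 : |j x.snd y.snd| ≤ Cj * ‖x‖ * ‖y‖ := by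
      refine (hjbdd _ _).trans ?_
      have := mul_le_mul (mul_le_mul_of_nonneg_left hx2 hCj.le) hy2 (norm_nonneg _)
        (by positivity)
      linarith [this]
    calc |a x.fst y.fst + b x.snd y.fst + b y.snd x.fst - j x.snd y.snd|
        ≤ |a x.fst y.fst| + |b x.snd y.fst| + |b y.snd x.fst| + |j x.snd y.snd| := by
          calc _ ≤ |a x.fst y.fst + b x.snd y.fst + b y.snd x.fst| + |j x.snd y.snd| := abs_sub _ _
          _ ≤ _ := by
            have h := abs_add_le (a x.fst y.fst + b x.snd y.fst) (b y.snd x.fst)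
            have h' := abs_add_le (a x.fst y.fst) (b x.snd y.fst)
            linarith
    _ ≤ (Ca + Cb + Cb + Cj) * ‖x‖ * ‖y‖ := by linarith
  let B : P →L[ℝ] P →L[ℝ] ℝ := LinearMap.mkContinuous₂ (stmt14A a b j) _ hbound
  have hB : ∀ x y : P, B x y = a x.fst y.fst + b x.snd y.fst + b y.snd x.fst - j x.snd y.snd :=
    fun _ _ => rfl
  have hBsymm : ∀ x y : P, B x y = B y x := by
    intro x y; rw [hB, hB, hasymm, hjsymm]; ring
  let T : P →L[ℝ] P := continuousLinearMapOfBilin (𝕜 := ℝ) B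
  have hT : ∀ x y : P, ⟪T x, y⟫_ℝ = B x y := fun x y => continuousLinearMapOfBilin_apply B x y
  -- lower bound
  have hlow : ∀ x : P, γ * ‖x‖ ≤ ‖T x‖ := by
    intro x
    obtain ⟨v, μ, hq1, hq2⟩ := hsup x.fst x.snd
    set q : P := (WithLp.equiv 2 (V × N)).symm (v, μ) with hq_def
    have hq1' : q.fst = v := rfl
    have hq2' : q.snd = μ := rfl
    have hqn : ‖q‖ ≤ 1 := by
      refine (hwhole q).trans ?_
      rw [hq1', hq2']
      exact hq1
    have hval : γ * (‖x.fst‖ + ‖x.snd‖) ≤ B x q := by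
      rw [hB, hq1', hq2']; exact hq2
    calc γ * ‖x‖ ≤ γ * (‖x.fst‖ + ‖x.snd‖) := mul_le_mul_of_nonneg_left (hwhole x) hγ.le
    _ ≤ B x q := hval
    _ = ⟪T x, q⟫_ℝ := (hT x q).symm
    _ ≤ ‖T x‖ * ‖q‖ := real_inner_le_norm _ _
    _ ≤ ‖T x‖ * 1 := mul_le_mul_of_nonneg_left hqn (norm_nonneg _)
    _ = ‖T x‖ := mul_one _
  have hTinj : ∀ x : P, T x = 0 → x = 0 := by
    intro x hx
    have h1 := hlow x
    rw [hx, norm_zero] at h1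
    have : ‖x‖ ≤ 0 := by nlinarith [norm_nonneg x]
    exact norm_le_zero_iff.mp this
  -- surjectivity
  have hanti : AntilipschitzWith (Real.toNNReal γ⁻¹) T := by
    refine ContinuousLinearMap.antilipschitz_of_bound T ?_
    intro x
    rw [Real.coe_toNNReal _ (by positivity)]
    rw [← inv_mul_le_iff₀ (by positivity : (0:ℝ) < γ⁻¹)]
    simpa [inv_inv] using hlow x
  have hclosed : IsClosed (LinearMap.range (T : P →ₗ[ℝ] P) : Set P) :=
    hanti.isClosed_range T.uniformContinuous
  have hrange : LinearMap.range (T : P →ₗ[ℝ] P) = ⊤ := by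
    haveI := hclosed.completeSpace_coe
    rw [← (LinearMap.range (T : P →ₗ[ℝ] P)).orthogonal_orthogonal, Submodule.eq_top_iff']
    intro v' w hw
    obtain rfl : w = 0 := by
      apply hTinj
      have hTw : ∀ z : P, ⟪T w, z⟫_ℝ = 0 := by
        intro z
        rw [hT, hBsymm, ← hT]
        exact hw (T z) ⟨z, rfl⟩
      exact inner_self_eq_zero.mp (hTw (T w))
    exact inner_zero_left _
  -- solve
  let e : P ≃L[ℝ] V × N := WithLp.prodContinuousLinearEquiv 2 ℝ V N
  let F' : P →L[ℝ] ℝ := F.comp (e : P →L[ℝ] V × N)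
  have hF' : ∀ z : P, F' z = F (z.fst, z.snd) := fun _ => rfl
  set yF : P := (InnerProductSpace.toDual ℝ P).symm F' with hyF
  have hyF' : ∀ z : P, ⟪yF, z⟫_ℝ = F' z := fun z => InnerProductSpace.toDual_symm_apply
  obtain ⟨p0, hp0⟩ := LinearMap.range_eq_top.mp hrange yF
  replace hp0 : T p0 = yF := hp0
  have hsol : ∀ (x : P) (v : V) (μ : N),
      a x.fst v + b x.snd v + b μ x.fst - j x.snd μ = B x ((WithLp.equiv 2 (V × N)).symm (v, μ)) :=
    fun _ _ _ => rfl
  refine ⟨(p0.fst, p0.snd), ?_, ?_⟩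
  · intro v μ
    have h1 := hsol p0 v μ
    simp only at h1 ⊢
    rw [h1, ← hT, hp0, hyF', hF']
    rfl
  · intro p hp
    set pl : P := (WithLp.equiv 2 (V × N)).symm p with hpl
    have hdiff : ∀ z : P, B (pl - p0) z = 0 := by
      intro z
      have hBp : B pl z = F' z := by
        rw [hB, hF']
        have := hp z.fst z.snd
        exact this
      have hBp0 : B p0 z = F' z := by rw [← hT, hp0, hyF']
      rw [map_sub, ContinuousLinearMap.sub_apply, hBp, hBp0, sub_self]
    have hz : pl - p0 = 0 := by
      apply hTinj
      have h0 : ∀ z : P, ⟪T (pl - p0), z⟫_ℝ = 0 := fun z => by rw [hT]; exact hdiff z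
      exact inner_self_eq_zero.mp (h0 (T (pl - p0)))
    have hpe : pl = p0 := by rwa [sub_eq_zero] at hz
    calc p = (pl.fst, pl.snd) := rfl
    _ = (p0.fst, p0.snd) := by rw [hpe]

end part2


/-- abstract Lemma 4.7 and its corollary: with
`A*((u,λ),(v,μ)) = a(u,v) + b(λ,v) + b(μ,u) − j(λ,μ)`, `a` symmetric coercive bounded,
`j` symmetric positive semidefinite bounded, `b` bounded, and the stability estimate
`β‖λ‖ ≤ sup_v b(λ,v)/‖v‖ + j(λ,λ)^{1/2}` (expressed via unit-ball test elements), the form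
`A*` satisfies an inf-sup condition and the problem `A*((u,λ),·) = F` is uniquely solvable
for every bounded linear functional `F`. -/
theorem stmt14 {V N : Type*}
    [NormedAddCommGroup V] [InnerProductSpace ℝ V] [CompleteSpace V]
    [NormedAddCommGroup N] [InnerProductSpace ℝ N] [CompleteSpace N]
    (a : V →ₗ[ℝ] V →ₗ[ℝ] ℝ) (b : N →ₗ[ℝ] V →ₗ[ℝ] ℝ) (j : N →ₗ[ℝ] N →ₗ[ℝ] ℝ)
    (α Ca Cb Cj β : ℝ) (hα : 0 < α) (hCa : 0 < Ca) (hCb : 0 < Cb) (hCj : 0 < Cj)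
    (hβ : 0 < β)
    (hasymm : ∀ u v, a u v = a v u)
    (hacoer : ∀ u, α * ‖u‖ ^ 2 ≤ a u u)
    (habdd : ∀ u v, |a u v| ≤ Ca * ‖u‖ * ‖v‖)
    (hjsymm : ∀ lam μ, j lam μ = j μ lam)
    (hjpsd : ∀ lam, 0 ≤ j lam lam)
    (hjbdd : ∀ lam μ, |j lam μ| ≤ Cj * ‖lam‖ * ‖μ‖)
    (hbbdd : ∀ lam v, |b lam v| ≤ Cb * ‖lam‖ * ‖v‖)
    (hstab : ∀ lam : N, ∃ v : V, ‖v‖ ≤ 1 ∧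
      β * ‖lam‖ ≤ b lam v + Real.sqrt (j lam lam)) :
    (∃ γ > 0, ∀ (u : V) (lam : N), ∃ (v : V) (μ : N), ‖v‖ + ‖μ‖ ≤ 1 ∧
      γ * (‖u‖ + ‖lam‖) ≤ a u v + b lam v + b μ u - j lam μ) ∧
    (∀ F : V × N →L[ℝ] ℝ, ∃! p : V × N, ∀ (v : V) (μ : N),
      a p.1 v + b p.2 v + b μ p.1 - j p.2 μ = F (v, μ)) := by
  obtain ⟨γ, hγ, hsup⟩ := stmt14_infsup a b j α Ca β hα hCa hβ hacoer habdd hjpsd hstab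
  exact ⟨⟨γ, hγ, hsup⟩,
    stmt14_solve a b j α Ca Cb Cj β γ hγ hCa hCb hCj hasymm habdd hjsymm hjbdd hbbdd hsup⟩
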